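/- Let M ≅ A⋉N be the solvable model of a symmetric space of noncompact type, where the left-invariant metric on 𝔞 ⊕ 𝔫 is given by ⟨X,Y⟩_{AN} = ⟨X_𝔞, Y_𝔞⟩_{B_θ} + ½⟨X_𝔫, Y_𝔫⟩_{B_θ}. Then for all X, Y, Z ∈ 𝔞 ⊕ 𝔫, the Levi-Civita connection satisfies ⟨∇_X Y, Z⟩_{AN} = ¼ B_θ([X,Y] + [θX, Y] − [X, θY], Z). -/
import Mathlib

/-- `B_θ`-symmetry: `K(X, θY) = K(Y, θX)`. -/
private lemma stmt17_aux_symm {L : Type*} [LieRing L] [LieAlgebra ℝ L] [Module.Finite ℝ L]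
    (θ : L ≃ₗ⁅ℝ⁆ L) (hθ : ∀ X, θ (θ X) = X) (X Y : L) :
    killingForm ℝ L X (θ Y) = killingForm ℝ L Y (θ X) := by
  have h := LieAlgebra.killingForm_of_equiv_apply θ X (θ Y)
  rw [hθ] at h
  rw [← h]
  exact LieModule.traceForm_comm ℝ L L (θ X) Y

/-- Invariance: `K(⁅X,Y⁆, θZ) = -K(Y, θ⁅θX,Z⁆)`. -/
private lemma stmt17_aux_inv {L : Type*} [LieRing L] [LieAlgebra ℝ L] [Module.Finite ℝ L]
    (θ : L ≃ₗ⁅ℝ⁆ L) (hθ : ∀ X, θ (θ X) = X) (X Y Z : L) :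
    killingForm ℝ L ⁅X, Y⁆ (θ Z) = -(killingForm ℝ L Y (θ ⁅θ X, Z⁆)) := by
  have h1 : θ ⁅θ X, Z⁆ = ⁅X, θ Z⁆ := by
    rw [LieEquiv.map_lie, hθ]
  rw [h1]
  have h2 : killingForm ℝ L ⁅Y, X⁆ (θ Z) = killingForm ℝ L Y ⁅X, θ Z⁆ :=
    LieModule.traceForm_apply_lie_apply ℝ L L Y X (θ Z)
  have h3 : (⁅X, Y⁆ : L) = -⁅Y, X⁆ := (lie_skew X Y).symm
  rw [h3, map_neg, LinearMap.neg_apply, h2]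

/-- In the solvable model `AN` of a symmetric space of noncompact type, the Levi-Civita
connection of the left-invariant metric
`⟨X,Y⟩_{AN} = ⟨X_𝔞,Y_𝔞⟩_{B_θ} + ½⟨X_𝔫,Y_𝔫⟩_{B_θ}` satisfies
`⟨∇_X Y, Z⟩_{AN} = ¼ B_θ([X,Y] + [θX,Y] − [X,θY], Z)`. -/
theorem stmt17 {L : Type*} [LieRing L] [LieAlgebra ℝ L] [Module.Finite ℝ L]
    (θ : L ≃ₗ⁅ℝ⁆ L) (hθ : ∀ X, θ (θ X) = X)
    (hpos : ∀ X : L, X ≠ 0 → 0 < -(killingForm ℝ L X (θ X)))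
    (a n : Submodule ℝ L)
    (haab : ∀ H ∈ a, ∀ H' ∈ a, ⁅H, H'⁆ = 0)
    (han : ∀ H ∈ a, ∀ X ∈ n, ⁅H, X⁆ ∈ n)
    (hnn : ∀ X ∈ n, ∀ Y ∈ n, ⁅X, Y⁆ ∈ n)
    -- `𝔞` and `𝔫` are `B_θ`-orthogonal
    (horth : ∀ H ∈ a, ∀ X ∈ n, -(killingForm ℝ L H (θ X)) = 0)
    -- projections onto the `𝔞`- and `𝔫`-components
    (πa πn : L →ₗ[ℝ] L)
    (hπa : ∀ H ∈ a, πa H = H ∧ πn H = 0)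
    (hπn : ∀ X ∈ n, πa X = 0 ∧ πn X = X)
    (innAN : L → L → ℝ)
    (hinnAN : ∀ X Y : L, innAN X Y
      = -(killingForm ℝ L (πa X) (θ (πa Y))) + (1 / 2) * -(killingForm ℝ L (πn X) (θ (πn Y))))
    (nabla : L → L → L)
    (hnabla_mem : ∀ X ∈ a ⊔ n, ∀ Y ∈ a ⊔ n, nabla X Y ∈ a ⊔ n)
    -- the Koszul formula for left-invariant vector fields
    (hKoszul : ∀ X ∈ a ⊔ n, ∀ Y ∈ a ⊔ n, ∀ Z ∈ a ⊔ n,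
      2 * innAN (nabla X Y) Z = innAN ⁅X, Y⁆ Z - innAN ⁅Y, Z⁆ X + innAN ⁅Z, X⁆ Y) :
    ∀ X ∈ a ⊔ n, ∀ Y ∈ a ⊔ n, ∀ Z ∈ a ⊔ n,
      innAN (nabla X Y) Z
        = (1 / 4) * -(killingForm ℝ L (⁅X, Y⁆ + ⁅θ X, Y⁆ - ⁅X, θ Y⁆) (θ Z)) := by
  intro X hX Y hY Z hZ
  have hθadd : ∀ u v : L, θ (u + v) = θ u + θ v := fun u v => θ.toLieHom.map_add u v
  have hθneg : ∀ u : L, θ (-u) = -(θ u) := fun u => θ.toLieHom.map_neg u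
  -- decompositions
  have hproj : ∀ V ∈ a ⊔ n, πa V ∈ a ∧ πn V ∈ n ∧ V = πa V + πn V := by
    intro V hV
    obtain ⟨H, hH, W, hW, rfl⟩ := Submodule.mem_sup.mp hV
    have h1 := hπa H hH
    have h2 := hπn W hW
    refine ⟨?_, ?_, ?_⟩ <;> simp [map_add, h1.1, h1.2, h2.1, h2.2, hH, hW]
  -- brackets of elements of `a ⊔ n` lie in `n`
  have hbr : ∀ V ∈ a ⊔ n, ∀ W ∈ a ⊔ n, ⁅V, W⁆ ∈ n := by
    intro V hV W hW
    obtain ⟨H1, h1, N1, hn1, rfl⟩ := Submodule.mem_sup.mp hV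
    obtain ⟨H2, h2, N2, hn2, rfl⟩ := Submodule.mem_sup.mp hW
    have : (⁅H1 + N1, H2 + N2⁆ : L)
        = ⁅H1, H2⁆ + ⁅H1, N2⁆ + (⁅N1, H2⁆ + ⁅N1, N2⁆) := by
      rw [add_lie, lie_add, lie_add]
    rw [this, haab H1 h1 H2 h2, zero_add]
    refine Submodule.add_mem _ (han H1 h1 N2 hn2) (Submodule.add_mem _ ?_ (hnn N1 hn1 N2 hn2))
    rw [← lie_skew]
    exact Submodule.neg_mem _ (han H2 h2 N1 hn1)
  -- orthogonality in the other order
  have horth' : ∀ W ∈ n, ∀ H ∈ a, killingForm ℝ L W (θ H) = 0 := by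
    intro W hW H hH
    have h0 := horth H hH W hW
    rw [stmt17_aux_symm θ hθ W H]
    linarith
  -- the inner product of an `n`-element with anything in `a ⊔ n`
  have hinn_n : ∀ W ∈ n, ∀ V ∈ a ⊔ n,
      innAN W V = (1 / 2) * -(killingForm ℝ L W (θ V)) := by
    intro W hW V hV
    obtain ⟨hVa, hVn, hVd⟩ := hproj V hV
    have hWp := hπn W hW
    rw [hinnAN, hWp.1, hWp.2]
    have hsplit : killingForm ℝ L W (θ V)
        = killingForm ℝ L W (θ (πa V)) + killingForm ℝ L W (θ (πn V)) := by
      conv_lhs => rw [hVd]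
      rw [hθadd, map_add]
    rw [horth' W hW (πa V) hVa] at hsplit
    simp only [map_zero, LinearMap.zero_apply, neg_zero, zero_add]
    rw [hsplit]
    ring
  -- Koszul formula in terms of `B_θ`
  have hk := hKoszul X hX Y hY Z hZ
  rw [hinn_n _ (hbr X hX Y hY) Z hZ, hinn_n _ (hbr Y hY Z hZ) X hX,
    hinn_n _ (hbr Z hZ X hX) Y hY] at hk
  -- the two invariance identities
  have I1 : killingForm ℝ L ⁅θ X, Y⁆ (θ Z) = killingForm ℝ L ⁅Z, X⁆ (θ Y) := by
    rw [stmt17_aux_inv θ hθ (θ X) Y Z, hθ, stmt17_aux_symm θ hθ ⁅Z, X⁆ Y,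
      show (⁅Z, X⁆ : L) = -⁅X, Z⁆ from (lie_skew Z X).symm, hθneg, map_neg]
  have I2 : killingForm ℝ L ⁅X, θ Y⁆ (θ Z) = killingForm ℝ L ⁅Y, Z⁆ (θ X) := by
    have h3 : (⁅X, θ Y⁆ : L) = -⁅θ Y, X⁆ := (lie_skew X (θ Y)).symm
    rw [h3, map_neg, LinearMap.neg_apply, stmt17_aux_inv θ hθ (θ Y) X Z, hθ, neg_neg,
      stmt17_aux_symm θ hθ X ⁅Y, Z⁆]
  -- expand the right-hand side and finish
  have hexp : killingForm ℝ L (⁅X, Y⁆ + ⁅θ X, Y⁆ - ⁅X, θ Y⁆) (θ Z)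
      = killingForm ℝ L ⁅X, Y⁆ (θ Z) + killingForm ℝ L ⁅Z, X⁆ (θ Y)
        - killingForm ℝ L ⁅Y, Z⁆ (θ X) := by
    rw [map_sub, map_add, LinearMap.sub_apply, LinearMap.add_apply, I1, I2]
  rw [hexp]
  linarith
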